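/- A random variable X on (Ω,𝓕,P) belongs to 𝓛_Q if and only if ∫_{(0,∞)} (1 − D(F_X(x))) dλ(x) < ∞, where λ is Lebesgue measure; that is, 𝓛_Q = {X | ∫_{(0,∞)} (1 − D(F_X(x))) dλ(x) < ∞}. -/

import Mathlib

open MeasureTheory

/-- The distribution function `F_X(x) = P[X ≤ x]` of a random variable `X`. -/
noncomputable def distFun {Ω : Type*} [MeasurableSpace Ω] (P : Measure Ω) (X : Ω → ℝ) (x : ℝ) : ℝ :=
  (P {ω | X ω ≤ x}).toReal

/-- The (lower) quantile function `F^←_X(u) = inf {x | F_X(x) ≥ u}`. -/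
noncomputable def quantile {Ω : Type*} [MeasurableSpace Ω] (P : Measure Ω) (X : Ω → ℝ) (u : ℝ) : ℝ :=
  sInf {x : ℝ | u ≤ distFun P X x}

/-- A distortion function: an increasing, right-continuous `D : [0,1] → [0,1]`
with `D 0 = 0` and `sup_{u ∈ (0,1)} D u = 1`. -/
structure IsDistortion (D : ℝ → ℝ) : Prop where
  mapsTo : ∀ u ∈ Set.Icc (0:ℝ) 1, D u ∈ Set.Icc (0:ℝ) 1
  mono : ∀ ⦃a b : ℝ⦄, 0 ≤ a → a ≤ b → b ≤ 1 → D a ≤ D b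
  rightCont : ∀ u ∈ Set.Ico (0:ℝ) 1, ContinuousWithinAt D (Set.Icc u 1) u
  zero : D 0 = 0
  sup_one : sSup (D '' Set.Ioo 0 1) = 1

/-- `Q` is the probability measure on the Borel sets of `(0,1)` corresponding to
the distortion function `D`, i.e. `Q (a,b] = D b - D a` for `0 < a ≤ b < 1`. -/
def IsCorresponding (D : ℝ → ℝ) (Q : Measure ℝ) : Prop :=
  IsProbabilityMeasure Q ∧ Q (Set.Ioo (0:ℝ) 1) = 1 ∧
    ∀ a b : ℝ, 0 < a → a ≤ b → b < 1 → Q (Set.Ioc a b) = ENNReal.ofReal (D b - D a)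

/-- `X ∈ 𝓛_Q`, i.e. `∫_{(0,1)} (F^←_X(u))⁺ dQ(u) < ∞`. -/
def memLQ {Ω : Type*} [MeasurableSpace Ω] (P : Measure Ω) (Q : Measure ℝ) (X : Ω → ℝ) : Prop :=
  ∫⁻ u in Set.Ioo (0:ℝ) 1, ENNReal.ofReal (max (quantile P X u) 0) ∂Q < ⊤

/-- The quantile risk measure
`ϱ_Q[X] = ∫_{(0,1)} (F^←_X(u))⁺ dQ(u) - ∫_{(0,1)} (F^←_X(u))⁻ dQ(u)`, with values in `EReal`. -/
noncomputable def rho {Ω : Type*} [MeasurableSpace Ω] (P : Measure Ω) (Q : Measure ℝ)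
    (X : Ω → ℝ) : EReal :=
  ((∫⁻ u in Set.Ioo (0:ℝ) 1, ENNReal.ofReal (max (quantile P X u) 0) ∂Q) : EReal)
    - ((∫⁻ u in Set.Ioo (0:ℝ) 1, ENNReal.ofReal (max (-(quantile P X u)) 0) ∂Q) : EReal)

section AuxLemmas
open Set Filter Topology
variable {Ω : Type*} [MeasurableSpace Ω] (P : Measure Ω) [IsProbabilityMeasure P] (X : Ω → ℝ) (hX : Measurable X)
include hX
set_option linter.unusedSectionVars false

lemma distFun_mono : Monotone (distFun P X) := fun a b hab => by
  apply ENNReal.toReal_mono (measure_ne_top _ _)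
  exact measure_mono fun ω hω => le_trans hω hab

lemma distFun_nonneg (x : ℝ) : 0 ≤ distFun P X x := ENNReal.toReal_nonneg

lemma distFun_le_one (x : ℝ) : distFun P X x ≤ 1 := by
  rw [distFun, ← ENNReal.toReal_one]
  exact ENNReal.toReal_mono ENNReal.one_ne_top prob_le_one

lemma distFun_tendsto_right (x : ℝ) :
    Tendsto (fun n : ℕ => distFun P X (x + 1/(n+1))) atTop (𝓝 (distFun P X x)) := by
  have hset : ⋂ n : ℕ, {ω | X ω ≤ x + 1/((n:ℝ)+1)} = {ω | X ω ≤ x} := by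
    ext ω
    simp only [mem_iInter, mem_setOf_eq]
    constructor
    · intro h
      by_contra hc
      push_neg at hc
      obtain ⟨n, hn⟩ := exists_nat_one_div_lt (sub_pos.2 hc)
      have := h n
      linarith
    · intro h n
      have : (0:ℝ) < 1/((n:ℝ)+1) := by positivity
      linarith
  have hmono : Antitone (fun n : ℕ => {ω | X ω ≤ x + 1/((n:ℝ)+1)}) := by
    intro m n hmn ω hω
    simp only [mem_setOf_eq] at *
    have h1 : (1:ℝ)/((n:ℝ)+1) ≤ 1/((m:ℝ)+1) := by
      gcongr
    linarith
  have ht := tendsto_measure_iInter_atTop (μ := P)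
    (fun n => (measurableSet_le hX measurable_const).nullMeasurableSet) hmono
    ⟨0, measure_ne_top _ _⟩
  rw [hset] at ht
  have := (ENNReal.tendsto_toReal (measure_ne_top P _)).comp ht
  exact this

lemma exists_lt_u {u : ℝ} (hu0 : 0 < u) : ∃ n : ℕ, distFun P X (-(n:ℝ)) < u := by
  have hset : ⋂ n : ℕ, {ω | X ω ≤ -(n:ℝ)} = (∅ : Set Ω) := by
    ext ω
    simp only [mem_iInter, mem_setOf_eq, mem_empty_iff_false, iff_false, not_forall, not_le]
    obtain ⟨n, hn⟩ := exists_nat_gt (-(X ω))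
    exact ⟨n, by linarith⟩
  have hmono : Antitone (fun n : ℕ => {ω | X ω ≤ -(n:ℝ)}) := by
    intro m n hmn ω hω
    simp only [mem_setOf_eq] at *
    have : (m:ℝ) ≤ n := by exact_mod_cast hmn
    linarith
  have ht := tendsto_measure_iInter_atTop (μ := P)
    (fun n => (measurableSet_le hX measurable_const).nullMeasurableSet) hmono
    ⟨0, measure_ne_top _ _⟩
  rw [hset] at ht
  have h2 := (ENNReal.tendsto_toReal (measure_ne_top P _)).comp ht
  simp only [measure_empty, ENNReal.toReal_zero] at h2
  exact ((h2.eventually (eventually_lt_nhds hu0)).exists)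

lemma exists_u_le {u : ℝ} (hu1 : u < 1) : ∃ n : ℕ, u ≤ distFun P X (n:ℝ) := by
  have hset : ⋃ n : ℕ, {ω | X ω ≤ (n:ℝ)} = (univ : Set Ω) := by
    ext ω
    simp only [mem_iUnion, mem_setOf_eq, mem_univ, iff_true]
    obtain ⟨n, hn⟩ := exists_nat_gt (X ω)
    exact ⟨n, hn.le⟩
  have hmono : Monotone (fun n : ℕ => {ω | X ω ≤ (n:ℝ)}) := by
    intro m n hmn ω hω
    simp only [mem_setOf_eq] at *
    have : (m:ℝ) ≤ n := by exact_mod_cast hmn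
    linarith
  have ht := tendsto_measure_iUnion_atTop (μ := P) hmono
  rw [hset] at ht
  have h2 := (ENNReal.tendsto_toReal (measure_ne_top P _)).comp ht
  simp only [measure_univ, ENNReal.toReal_one] at h2
  exact ((h2.eventually (eventually_gt_nhds hu1)).exists).imp fun n hn => hn.le

lemma quantile_bddBelow {u : ℝ} (hu0 : 0 < u) : BddBelow {x : ℝ | u ≤ distFun P X x} := by
  obtain ⟨n, hn⟩ := exists_lt_u P X hX hu0
  refine ⟨-(n:ℝ), fun y hy => ?_⟩
  by_contra hc
  push_neg at hc
  exact absurd (le_trans hy (distFun_mono P X hX hc.le)) (not_le.2 hn)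

lemma quantile_nonempty {u : ℝ} (hu1 : u < 1) : {x : ℝ | u ≤ distFun P X x}.Nonempty := by
  obtain ⟨n, hn⟩ := exists_u_le P X hX hu1
  exact ⟨(n:ℝ), hn⟩

lemma quantile_le_iff {u x : ℝ} (hu0 : 0 < u) (hu1 : u < 1) :
    quantile P X u ≤ x ↔ u ≤ distFun P X x := by
  constructor
  · intro h
    have key : ∀ n : ℕ, u ≤ distFun P X (x + 1/((n:ℝ)+1)) := by
      intro n
      have hlt : sInf {x : ℝ | u ≤ distFun P X x} < x + 1/((n:ℝ)+1) := by
        have : (0:ℝ) < 1/((n:ℝ)+1) := by positivity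
        calc sInf {x : ℝ | u ≤ distFun P X x} ≤ x := h
        _ < x + 1/((n:ℝ)+1) := by linarith
      obtain ⟨y, hy, hylt⟩ := (csInf_lt_iff (quantile_bddBelow P X hX hu0)
        (quantile_nonempty P X hX hu1)).1 hlt
      exact le_trans hy (distFun_mono P X hX hylt.le)
    exact ge_of_tendsto' (distFun_tendsto_right P X hX x) key
  · intro h
    exact csInf_le (quantile_bddBelow P X hX hu0) h

lemma quantile_monotoneOn : MonotoneOn (quantile P X) (Set.Ioo 0 1) := by
  intro u hu v hv huv
  apply csInf_le_csInf (quantile_bddBelow P X hX hu.1) (quantile_nonempty P X hX hv.2)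
  intro y hy
  exact le_trans huv hy

omit hX

lemma distortion_one {D : ℝ → ℝ} (hD : IsDistortion D) : D 1 = 1 := by
  have hub : ∀ y ∈ D '' Set.Ioo (0:ℝ) 1, y ≤ D 1 := by
    rintro y ⟨u, hu, rfl⟩
    exact hD.mono hu.1.le hu.2.le le_rfl
  have h1 : sSup (D '' Set.Ioo (0:ℝ) 1) ≤ D 1 :=
    csSup_le ⟨D (1/2), ⟨1/2, by norm_num, rfl⟩⟩ hub
  rw [hD.sup_one] at h1
  exact le_antisymm (hD.mapsTo 1 ⟨zero_le_one, le_rfl⟩).2 h1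

lemma D_tendsto_zero {D : ℝ → ℝ} (hD : IsDistortion D) {c : ℝ} (hc0 : 0 < c) (hc1 : c < 1) :
    Tendsto (fun n : ℕ => D (c / ((n:ℝ)+1))) atTop (𝓝 0) := by
  have hcw : ContinuousWithinAt D (Set.Icc 0 1) 0 := hD.rightCont 0 ⟨le_rfl, zero_lt_one⟩
  have ha : Tendsto (fun n : ℕ => c / ((n:ℝ)+1)) atTop (𝓝 0) := by
    have := tendsto_one_div_add_atTop_nhds_zero_nat.const_mul c
    simpa [div_eq_mul_inv, mul_comm, mul_one_div] using this
  have hmem : ∀ n : ℕ, c / ((n:ℝ)+1) ∈ Set.Icc (0:ℝ) 1 := by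
    intro n
    constructor
    · positivity
    · have h2 : c / ((n:ℝ)+1) ≤ c := by
        apply div_le_self hc0.le
        have : (0:ℝ) ≤ n := Nat.cast_nonneg n
        linarith
      linarith
  have := hcw.tendsto.comp
    (tendsto_nhdsWithin_of_tendsto_nhds_of_eventually_within _ ha (Eventually.of_forall hmem))
  simpa [hD.zero, Function.comp_def] using this

lemma Q_Ioc_zero {D : ℝ → ℝ} {Q : Measure ℝ} (hD : IsDistortion D) (hQ : IsCorresponding D Q)
    {c : ℝ} (hc0 : 0 < c) (hc1 : c < 1) : Q (Set.Ioc 0 c) = ENNReal.ofReal (D c) := by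
  have hUnion : ⋃ n : ℕ, Set.Ioc (c / ((n:ℝ)+1)) c = Set.Ioc 0 c := by
    ext x
    simp only [Set.mem_iUnion, Set.mem_Ioc]
    constructor
    · rintro ⟨n, h1, h2⟩
      refine ⟨lt_trans (by positivity) h1, h2⟩
    · rintro ⟨h1, h2⟩
      obtain ⟨n, hn⟩ := exists_nat_one_div_lt (div_pos h1 hc0)
      refine ⟨n, ?_, h2⟩
      have : c * (1/((n:ℝ)+1)) < c * (x/c) := by
        apply mul_lt_mul_of_pos_left hn hc0
      rw [mul_one_div, mul_div_cancel₀ x hc0.ne'] at this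
      exact this
  have hmono : Monotone (fun n : ℕ => Set.Ioc (c / ((n:ℝ)+1)) c) := by
    intro m n hmn x hx
    refine ⟨lt_of_le_of_lt ?_ hx.1, hx.2⟩
    gcongr
  have h1 := tendsto_measure_iUnion_atTop (μ := Q) hmono
  rw [hUnion] at h1
  have heq : (fun n : ℕ => Q (Set.Ioc (c / ((n:ℝ)+1)) c))
      = fun n : ℕ => ENNReal.ofReal (D c - D (c / ((n:ℝ)+1))) := by
    funext n
    apply hQ.2.2
    · positivity
    · apply div_le_self hc0.le
      have : (0:ℝ) ≤ n := Nat.cast_nonneg n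
      linarith
    · exact hc1
  have h2 : Tendsto (fun n : ℕ => ENNReal.ofReal (D c - D (c / ((n:ℝ)+1)))) atTop
      (𝓝 (ENNReal.ofReal (D c - 0))) :=
    (ENNReal.continuous_ofReal.tendsto _).comp (tendsto_const_nhds.sub (D_tendsto_zero hD hc0 hc1))
  rw [show (⇑Q ∘ fun n : ℕ => Set.Ioc (c / ((n:ℝ)+1)) c)
      = fun n : ℕ => Q (Set.Ioc (c / ((n:ℝ)+1)) c) from rfl, heq] at h1
  have := tendsto_nhds_unique h1 h2
  rw [this, sub_zero]

lemma Q_Ioo_one {D : ℝ → ℝ} {Q : Measure ℝ} (hD : IsDistortion D) (hQ : IsCorresponding D Q)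
    {c : ℝ} (hc0 : 0 ≤ c) (hc1 : c ≤ 1) : Q (Set.Ioo c 1) = ENNReal.ofReal (1 - D c) := by
  haveI := hQ.1
  rcases eq_or_lt_of_le hc1 with rfl | hc1'
  · simp [distortion_one hD]
  rcases eq_or_lt_of_le hc0 with rfl | hc0'
  · simpa [hD.zero] using hQ.2.1
  have hsub : Set.Ioc 0 c ⊆ Set.Ioo (0:ℝ) 1 := fun x hx => ⟨hx.1, lt_of_le_of_lt hx.2 hc1'⟩
  have hdiff : Set.Ioo (0:ℝ) 1 \ Set.Ioc 0 c = Set.Ioo c 1 := by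
    ext x
    simp only [Set.mem_diff, Set.mem_Ioo, Set.mem_Ioc, not_and, not_le]
    constructor
    · rintro ⟨⟨h1, h2⟩, h3⟩
      exact ⟨h3 h1, h2⟩
    · rintro ⟨h1, h2⟩
      exact ⟨⟨lt_trans hc0' h1, h2⟩, fun _ => h1⟩
  have hQc := Q_Ioc_zero hD hQ hc0' hc1'
  rw [← hdiff, measure_diff hsub measurableSet_Ioc.nullMeasurableSet (by rw [hQc]; exact ENNReal.ofReal_ne_top),
    hQ.2.1, hQc, ← ENNReal.ofReal_one, ← ENNReal.ofReal_sub _ (hD.mapsTo c ⟨hc0, hc1⟩).1]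


end AuxLemmas

/-- `X ∈ 𝓛_Q` if and only if `∫_{(0,∞)} (1 - D(F_X(x))) dλ(x) < ∞`. -/
theorem memLQ_iff_lintegral_one_sub_distortion_lt_top {Ω : Type*} [MeasurableSpace Ω]
    (P : Measure Ω) [IsProbabilityMeasure P] (D : ℝ → ℝ) (Q : Measure ℝ)
    (hD : IsDistortion D) (hQ : IsCorresponding D Q)
    (X : Ω → ℝ) (hX : Measurable X) :
    memLQ P Q X ↔ ∫⁻ x in Set.Ioi (0:ℝ), ENNReal.ofReal (1 - D (distFun P X x)) < ⊤ := by
  haveI := hQ.1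
  have f_nn : 0 ≤ᵐ[Q.restrict (Set.Ioo 0 1)] fun u => max (quantile P X u) 0 :=
    Filter.Eventually.of_forall fun u => le_max_right _ _
  have f_mble : AEMeasurable (fun u => max (quantile P X u) 0) (Q.restrict (Set.Ioo 0 1)) := by
    apply aemeasurable_restrict_of_monotoneOn measurableSet_Ioo
    intro u hu v hv huv
    exact max_le_max (quantile_monotoneOn P X hX hu hv huv) le_rfl
  have key := lintegral_eq_lintegral_meas_lt (Q.restrict (Set.Ioo 0 1)) f_nn f_mble
  have hpt : ∀ t ∈ Set.Ioi (0:ℝ),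
      (Q.restrict (Set.Ioo 0 1)) {u | t < max (quantile P X u) 0}
        = ENNReal.ofReal (1 - D (distFun P X t)) := by
    intro t ht
    have ht' : (0:ℝ) < t := ht
    rw [Measure.restrict_apply₀' measurableSet_Ioo.nullMeasurableSet]
    have hseteq : {u | t < max (quantile P X u) 0} ∩ Set.Ioo 0 1
        = Set.Ioo (distFun P X t) 1 := by
      ext u
      simp only [Set.mem_inter_iff, Set.mem_setOf_eq, Set.mem_Ioo]
      constructor
      · rintro ⟨h1, h2, h3⟩
        have hq : t < quantile P X u := by
          rcases lt_max_iff.1 h1 with h | h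
          · exact h
          · linarith
        refine ⟨?_, h3⟩
        by_contra hc
        push_neg at hc
        exact absurd ((quantile_le_iff P X hX h2 h3).2 hc) (not_le.2 hq)
      · rintro ⟨h1, h2⟩
        have hu0 : 0 < u := lt_of_le_of_lt (distFun_nonneg P X hX t) h1
        refine ⟨?_, hu0, h2⟩
        have hq : t < quantile P X u := by
          by_contra hc
          push_neg at hc
          exact absurd ((quantile_le_iff P X hX hu0 h2).1 hc) (not_le.2 h1)
        exact lt_max_iff.2 (Or.inl hq)
    rw [hseteq]
    exact Q_Ioo_one hD hQ (distFun_nonneg P X hX t) (distFun_le_one P X hX t)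
  have main : (∫⁻ u in Set.Ioo (0:ℝ) 1, ENNReal.ofReal (max (quantile P X u) 0) ∂Q)
      = ∫⁻ x in Set.Ioi (0:ℝ), ENNReal.ofReal (1 - D (distFun P X x)) := by
    rw [show (∫⁻ u in Set.Ioo (0:ℝ) 1, ENNReal.ofReal (max (quantile P X u) 0) ∂Q)
        = ∫⁻ u, ENNReal.ofReal (max (quantile P X u) 0) ∂(Q.restrict (Set.Ioo 0 1)) from rfl,
      key]
    exact setLIntegral_congr_fun measurableSet_Ioi hpt
  unfold memLQ
  rw [main]
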